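/- Let W₁, W₂ : ℝ → Matrix (Fin n) (Fin n) ℝ be differentiable and let G : ℝ → Matrix (Fin n) (Fin n) ℝ be a function such that W₁'(t) = −W₂(t)ᵀ * G(t) and W₂'(t) = −G(t) * W₁(t)ᵀ for all t ∈ ℝ. Then the matrix W₁(t) W₁(t)ᵀ − W₂(t)ᵀ W₂(t) is constant in t; i.e., for all t, W₁(t)W₁(t)ᵀ − W₂(t)ᵀW₂(t) = W₁(0)W₁(0)ᵀ − W₂(0)ᵀW₂(0). -/

import Mathlib

open Matrix

/-- **Conservation law of the two-layer contrastive gradient flow.**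
If `W₁, W₂ : ℝ → Matrix (Fin n) (Fin n) ℝ` are differentiable (entrywise) with
`Ẇ₁ = −W₂ᵀ G` and `Ẇ₂ = −G W₁ᵀ`, then `W₁ W₁ᵀ − W₂ᵀ W₂` is constant in time. -/
theorem two_layer_conservation (n : ℕ)
    (W₁ W₂ G : ℝ → Matrix (Fin n) (Fin n) ℝ)
    (hW₁ : ∀ t i j, HasDerivAt (fun s => W₁ s i j) ((-(W₂ t)ᵀ * G t) i j) t)
    (hW₂ : ∀ t i j, HasDerivAt (fun s => W₂ s i j) ((-(G t) * (W₁ t)ᵀ) i j) t) :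
    ∀ t, W₁ t * (W₁ t)ᵀ - (W₂ t)ᵀ * W₂ t
        = W₁ 0 * (W₁ 0)ᵀ - (W₂ 0)ᵀ * W₂ 0 := by
  intro t
  ext i j
  have key : ∀ s : ℝ, HasDerivAt
      (fun u => (W₁ u * (W₁ u)ᵀ - (W₂ u)ᵀ * W₂ u) i j) 0 s := by
    intro s
    have h1 : HasDerivAt (fun u => ∑ k, W₁ u i k * W₁ u j k)
        (∑ k, ((-(W₂ s)ᵀ * G s) i k * W₁ s j k
              + W₁ s i k * (-(W₂ s)ᵀ * G s) j k)) s := by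
      apply HasDerivAt.fun_sum
      intro k _
      exact (hW₁ s i k).mul (hW₁ s j k)
    have h2 : HasDerivAt (fun u => ∑ k, W₂ u k i * W₂ u k j)
        (∑ k, ((-(G s) * (W₁ s)ᵀ) k i * W₂ s k j
              + W₂ s k i * (-(G s) * (W₁ s)ᵀ) k j)) s := by
      apply HasDerivAt.fun_sum
      intro k _
      exact (hW₂ s k i).mul (hW₂ s k j)
    have h3 := h1.sub h2
    have heq : (∑ k, ((-(W₂ s)ᵀ * G s) i k * W₁ s j k
              + W₁ s i k * (-(W₂ s)ᵀ * G s) j k))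
            - (∑ k, ((-(G s) * (W₁ s)ᵀ) k i * W₂ s k j
              + W₂ s k i * (-(G s) * (W₁ s)ᵀ) k j)) = 0 := by
      simp only [Matrix.mul_apply, Matrix.neg_apply, Matrix.transpose_apply]
      rw [sub_eq_zero]
      simp only [Finset.sum_add_distrib, Finset.sum_mul, Finset.mul_sum,
        Finset.sum_neg_distrib, neg_mul, mul_neg]
      rw [add_comm]
      congr 1
      · rw [Finset.sum_comm]
        exact neg_inj.mpr (Finset.sum_congr rfl fun k _ => Finset.sum_congr rfl fun l _ => by ring)
      · rw [Finset.sum_comm]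
        exact neg_inj.mpr (Finset.sum_congr rfl fun k _ => Finset.sum_congr rfl fun l _ => by ring)
    rw [← heq]
    have : (fun u => (W₁ u * (W₁ u)ᵀ - (W₂ u)ᵀ * W₂ u) i j)
        = fun u => (∑ k, W₁ u i k * W₁ u j k) - ∑ k, W₂ u k i * W₂ u k j := by
      funext u
      simp [Matrix.mul_apply, Matrix.sub_apply, Matrix.transpose_apply]
    rw [this]
    exact h3
  have hconst := fun s => (key s).deriv
  have : (fun u => (W₁ u * (W₁ u)ᵀ - (W₂ u)ᵀ * W₂ u) i j) t
       = (fun u => (W₁ u * (W₁ u)ᵀ - (W₂ u)ᵀ * W₂ u) i j) 0 :=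
    is_const_of_deriv_eq_zero (fun s => (key s).differentiableAt) hconst t 0
  simpa using this
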